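/- There exists a function x : [0,a] → ℝ, differentiable on [0,a] (one-sidedly at the endpoints), such that x(0) = x₀, (t, x(t)) ∈ U for all t ∈ [0,a], and x'(t) = f(t, x(t)) for all t ∈ [0,a]. That is, the initial value problem x' = f(t,x), x(0) = x₀ admits a solution defined on all of [0,a]. -/

import Mathlib

open Filter Topology Set

/-- Existence: the IVP x' = f(t,x), x(0) = x₀ admits a solution on [0,a],
taking values with (t, x(t)) ∈ U. -/
theorem ivp_existence
    (a M L x₀ : ℝ) (ha : 0 < a) (hM : 0 < M) (hL : 0 < L)
    (U : Set (ℝ × ℝ))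
    (hU : U = Set.Icc (0 : ℝ) a ×ˢ Set.Icc (x₀ - M * a) (x₀ + M * a))
    (f : ℝ × ℝ → ℝ)
    (hf_lip : ∀ u ∈ U, ∀ v ∈ U, |f u - f v| ≤ L * (|u.1 - v.1| + |u.2 - v.2|))
    (hf_bdd : ∀ u ∈ U, |f u| ≤ M) :
    ∃ x : ℝ → ℝ, x 0 = x₀ ∧
      ∀ t ∈ Set.Icc (0 : ℝ) a,
        (t, x t) ∈ U ∧ HasDerivWithinAt x (f (t, x t)) (Set.Icc (0 : ℝ) a) t := by
  -- clamping functions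
  set pt : ℝ → ℝ := fun t => max 0 (min t a) with hpt
  set px : ℝ → ℝ := fun y => max (x₀ - M * a) (min y (x₀ + M * a)) with hpx
  have hMa : x₀ - M * a ≤ x₀ + M * a := by nlinarith
  have hpt_mem : ∀ t, pt t ∈ Set.Icc (0 : ℝ) a := fun t =>
    ⟨le_max_left _ _, max_le ha.le (min_le_right _ _)⟩
  have hpx_mem : ∀ y, px y ∈ Set.Icc (x₀ - M * a) (x₀ + M * a) := fun y =>
    ⟨le_max_left _ _, max_le hMa (min_le_right _ _)⟩
  have hpt_lip : LipschitzWith 1 pt := (LipschitzWith.id.min_const a).const_max 0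
  have hpx_lip : LipschitzWith 1 px := (LipschitzWith.id.min_const _).const_max _
  have hpt_id : ∀ t ∈ Set.Icc (0 : ℝ) a, pt t = t := by
    intro t ht
    simp [hpt, min_eq_left ht.2, max_eq_right ht.1]
  have hpx_id : ∀ y ∈ Set.Icc (x₀ - M * a) (x₀ + M * a), px y = y := by
    intro y hy
    simp [hpx, min_eq_left hy.2, max_eq_right hy.1]
  have hmemU : ∀ t y, (pt t, px y) ∈ U := by
    intro t y; rw [hU]; exact ⟨hpt_mem t, hpx_mem y⟩
  -- the extended vector field
  set v : ℝ → ℝ → ℝ := fun t y => f (pt t, px y) with hv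
  have hLnn : (L.toNNReal : ℝ) = L := Real.coe_toNNReal _ hL.le
  have hpl : IsPicardLindelof v (tmin := 0) (tmax := a) ⟨0, le_refl 0, ha.le⟩ x₀
      (M * a).toNNReal 0 M.toNNReal L.toNNReal := by
    constructor
    · intro t _
      rw [lipschitzOnWith_iff_dist_le_mul]
      intro y _ z _
      simp only [Real.dist_eq, hv, hLnn]
      calc |f (pt t, px y) - f (pt t, px z)| ≤ L * (|pt t - pt t| + |px y - px z|) :=
            hf_lip _ (hmemU t y) _ (hmemU t z)
        _ ≤ L * |y - z| := by
            have h1 : |px y - px z| ≤ |y - z| := by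
              have := hpx_lip.dist_le_mul y z
              simpa [Real.dist_eq] using this
            have h2 : |pt t - pt t| = 0 := by simp
            rw [h2, zero_add]
            exact mul_le_mul_of_nonneg_left h1 hL.le
    · intro y _
      have : LipschitzWith L.toNNReal (fun t => v t y) := by
        rw [lipschitzWith_iff_dist_le_mul]
        intro s t
        simp only [Real.dist_eq, hv, hLnn]
        calc |f (pt s, px y) - f (pt t, px y)| ≤ L * (|pt s - pt t| + |px y - px y|) :=
              hf_lip _ (hmemU s y) _ (hmemU t y)
          _ ≤ L * |s - t| := by
              have h1 : |pt s - pt t| ≤ |s - t| := by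
                have := hpt_lip.dist_le_mul s t
                simpa [Real.dist_eq] using this
              have h2 : |px y - px y| = 0 := by simp
              rw [h2, add_zero]
              exact mul_le_mul_of_nonneg_left h1 hL.le
      exact this.continuous.continuousOn
    · intro t _ y _
      simpa [Real.norm_eq_abs, Real.coe_toNNReal _ hM.le] using hf_bdd _ (hmemU t y)
    · simp [ha.le, max_eq_left, Real.coe_toNNReal _ hM.le, Real.coe_toNNReal _ (mul_pos hM ha).le]
  obtain ⟨x, hx0, hx⟩ : ∃ x : ℝ → ℝ, x 0 = x₀ ∧ ∀ t ∈ Set.Icc (0 : ℝ) a,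
      HasDerivWithinAt x (v t (x t)) (Set.Icc (0 : ℝ) a) t :=
    hpl.exists_eq_forall_mem_Icc_hasDerivWithinAt₀
  -- the solution stays in the strip
  have hstay : ∀ t ∈ Set.Icc (0 : ℝ) a, x t ∈ Set.Icc (x₀ - M * a) (x₀ + M * a) := by
    intro t ht
    have hconv : Convex ℝ (Set.Icc (0 : ℝ) a) := convex_Icc _ _
    have hbd : ∀ s ∈ Set.Icc (0 : ℝ) a, ‖v s (x s)‖ ≤ M := by
      intro s _
      simpa [Real.norm_eq_abs] using hf_bdd _ (hmemU s (x s))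
    have := hconv.norm_image_sub_le_of_norm_hasDerivWithin_le hx hbd
      (Set.left_mem_Icc.2 ha.le) ht
    rw [hx0] at this
    have habs : |x t - x₀| ≤ M * a := by
      have ht' : |t - 0| ≤ a := by
        rw [sub_zero, abs_of_nonneg ht.1]; exact ht.2
      calc |x t - x₀| ≤ M * |t - 0| := by simpa [Real.norm_eq_abs] using this
        _ ≤ M * a := mul_le_mul_of_nonneg_left ht' hM.le
    rw [abs_le] at habs
    constructor <;> linarith [habs.1, habs.2]
  refine ⟨x, hx0, fun t ht => ?_⟩
  have hmem : (t, x t) ∈ U := by rw [hU]; exact ⟨ht, hstay t ht⟩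
  have heq : v t (x t) = f (t, x t) := by
    simp only [hv, hpt_id t ht, hpx_id (x t) (hstay t ht)]
  exact ⟨hmem, heq ▸ hx t ht⟩
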